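/- Let N and R be k×d real matrices with R of rank d and R^T N = |E| Λ for |E| > 0 and Λ symmetric positive definite d×d; let C be a k×(k−d) matrix whose columns form a basis of (Im N)^⊥. A symmetric positive definite k×k matrix M satisfies M N = R if and only if M = (1/|E|) R Λ^{-1} R^T + C U C^T for some symmetric positive definite (k−d)×(k−d) matrix U. -/

import Mathlib

open Matrix

private lemma quad_aux {m n : Type*} [Fintype m] [Fintype n]
    (B : Matrix m n ℝ) (D : Matrix m m ℝ) (x : n → ℝ) :
    x ⬝ᵥ (Bᵀ * D * B) *ᵥ x = (B *ᵥ x) ⬝ᵥ D *ᵥ (B *ᵥ x) := by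
  rw [Matrix.mul_assoc, ← mulVec_mulVec, dotProduct_mulVec, vecMul_transpose, mulVec_mulVec]

private lemma symm_aux {m n : Type*} [Fintype m] [Fintype n]
    (B : Matrix m n ℝ) (D : Matrix m m ℝ) (hD : Dᵀ = D) :
    (Bᵀ * D * B)ᵀ = Bᵀ * D * B := by
  rw [transpose_mul, transpose_mul, transpose_transpose, hD, Matrix.mul_assoc]

private lemma ct_eq {m n : Type*} (A : Matrix m n ℝ) : Aᴴ = Aᵀ := by
  ext i j; simp [conjTranspose_apply]

private lemma posdef_CtC {k l : Type*} [Fintype k] [Fintype l] [DecidableEq l]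
    (C : Matrix k l ℝ) (hC : Function.Injective C.mulVecLin) : (Cᵀ * C).PosDef := by
  rw [posDef_iff_dotProduct_mulVec]
  constructor
  · show (Cᵀ * C)ᴴ = _
    rw [ct_eq, transpose_mul, transpose_transpose]
  · intro x hx
    have hx' : C *ᵥ x ≠ 0 := by
      intro h
      exact hx (hC (a₁ := x) (a₂ := 0) (by simpa [mulVecLin_apply] using h))
    have : star x ⬝ᵥ (Cᵀ * C) *ᵥ x = (C *ᵥ x) ⬝ᵥ (C *ᵥ x) := by
      rw [star_trivial, ← mulVec_mulVec, dotProduct_mulVec, vecMul_transpose]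
    rw [this]
    rcases lt_or_eq_of_le (Finset.sum_nonneg fun i _ => mul_self_nonneg ((C *ᵥ x) i)) with h | h
    · exact h
    · exact absurd (dotProduct_self_eq_zero.mp h.symm) hx'

theorem stmt14 (k d : ℕ) (hdk : d < k)
    (N R : Matrix (Fin k) (Fin d) ℝ) (hR : R.rank = d)
    (Λ : Matrix (Fin d) (Fin d) ℝ) (hΛ : Λ.PosDef)
    (e : ℝ) (he : 0 < e) (hRN : Rᵀ * N = e • Λ)
    (C : Matrix (Fin k) (Fin (k - d)) ℝ)
    (hC : Function.Injective C.mulVecLin)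
    (hCN : LinearMap.ker (Cᵀ).mulVecLin = LinearMap.range N.mulVecLin)
    (M : Matrix (Fin k) (Fin k) ℝ) (hM : M.PosDef) :
    M * N = R ↔ ∃ U : Matrix (Fin (k - d)) (Fin (k - d)) ℝ,
      U.PosDef ∧ M = e⁻¹ • (R * Λ⁻¹ * Rᵀ) + C * U * Cᵀ := by
  have hΛdet : IsUnit Λ.det := hΛ.det_pos.ne'.isUnit
  have hΛt : Λᵀ = Λ := by rw [← ct_eq]; exact hΛ.1
  have hMt : Mᵀ = M := by rw [← ct_eq]; exact hM.1
  have hΛinv' : Λ⁻¹ * Λ = 1 := nonsing_inv_mul Λ hΛdet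
  have hΛit : Λ⁻¹ᵀ = Λ⁻¹ := by rw [transpose_nonsing_inv, hΛt]
  -- CᵀN = 0
  have hCtN : Cᵀ * N = 0 := by
    ext i j
    have h1 : Cᵀ.mulVecLin (N.mulVecLin (Pi.single j 1)) = 0 := by
      have hmem : N.mulVecLin (Pi.single j 1) ∈ LinearMap.range N.mulVecLin := ⟨_, rfl⟩
      rw [← hCN] at hmem
      exact hmem
    simp only [mulVecLin_apply] at h1
    rw [mulVec_mulVec, mulVec_single_one] at h1
    simpa using congrFun h1 i
  -- N injective
  have hNker : ∀ v, N *ᵥ v = 0 → v = 0 := by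
    intro v hv
    have h1 : (Rᵀ * N) *ᵥ v = 0 := by rw [← mulVec_mulVec, hv, mulVec_zero]
    rw [hRN, smul_mulVec] at h1
    have h2 : Λ *ᵥ v = 0 := by
      rcases smul_eq_zero.mp h1 with h | h
      · exact absurd h he.ne'
      · exact h
    have := congrArg (Λ⁻¹ *ᵥ ·) h2
    simpa [mulVec_mulVec, hΛinv'] using this
  have hNinj : Function.Injective N.mulVecLin := by
    rw [← LinearMap.ker_eq_bot]
    exact (Submodule.eq_bot_iff _).mpr fun v hv =>
      hNker v (by simpa [mulVecLin_apply] using hv)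
  have hNrank : N.rank = d := by
    rw [Matrix.rank]
    have h1 := LinearMap.finrank_range_add_finrank_ker N.mulVecLin
    rw [LinearMap.ker_eq_bot.mpr hNinj, finrank_bot, add_zero] at h1
    rw [h1, Module.finrank_fintype_fun_eq_card, Fintype.card_fin]
  -- range C = ker Nᵀ
  have hNtC : Nᵀ * C = 0 := by
    have := congrArg transpose hCtN
    simpa [transpose_mul] using this
  have hrangeC : LinearMap.range C.mulVecLin = LinearMap.ker (Nᵀ).mulVecLin := by
    apply Submodule.eq_of_le_of_finrank_eq
    · rintro x ⟨v, rfl⟩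
      simp only [LinearMap.mem_ker, mulVecLin_apply, mulVec_mulVec, hNtC, zero_mulVec]
    · have h1 : Module.finrank ℝ (LinearMap.range C.mulVecLin) = k - d := by
        have h := LinearMap.finrank_range_add_finrank_ker C.mulVecLin
        rw [LinearMap.ker_eq_bot.mpr hC, finrank_bot, add_zero] at h
        rw [h, Module.finrank_fintype_fun_eq_card, Fintype.card_fin]
      have h2 : Module.finrank ℝ (LinearMap.ker (Nᵀ).mulVecLin) = k - d := by
        have h3 := LinearMap.finrank_range_add_finrank_ker (Nᵀ).mulVecLin
        have h4 : Module.finrank ℝ (LinearMap.range (Nᵀ).mulVecLin) = d := by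
          have h5 : Nᵀ.rank = d := by rw [rank_transpose]; exact hNrank
          simpa [Matrix.rank] using h5
        rw [h4, Module.finrank_fintype_fun_eq_card, Fintype.card_fin] at h3
        omega
      rw [h1, h2]
  have hRRN : R * Λ⁻¹ * Rᵀ * N = e • R := by
    rw [Matrix.mul_assoc (R * Λ⁻¹) Rᵀ N, hRN, Matrix.mul_smul, Matrix.mul_assoc, hΛinv',
      Matrix.mul_one]
  constructor
  · -- forward
    intro hMN
    set G := Cᵀ * C with hGdef
    have hG := posdef_CtC C hC
    have hGdet : IsUnit G.det := hG.det_pos.ne'.isUnit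
    have hGt : Gᵀ = G := by rw [hGdef, transpose_mul, transpose_transpose]
    have hGinv : G * G⁻¹ = 1 := mul_nonsing_inv _ hGdet
    have hGinv' : G⁻¹ * G = 1 := nonsing_inv_mul _ hGdet
    have hGit : G⁻¹ᵀ = G⁻¹ := by rw [transpose_nonsing_inv, hGt]
    set D := M - e⁻¹ • (R * Λ⁻¹ * Rᵀ) with hDdef
    have hXt : (R * Λ⁻¹ * Rᵀ)ᵀ = R * Λ⁻¹ * Rᵀ := by
      rw [transpose_mul, transpose_mul, transpose_transpose, hΛit, Matrix.mul_assoc]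
    have hDt : Dᵀ = D := by
      rw [hDdef, transpose_sub, hMt, transpose_smul, hXt]
    have hDN : D * N = 0 := by
      rw [hDdef, Matrix.sub_mul, hMN, Matrix.smul_mul, hRRN, smul_smul,
        inv_mul_cancel₀ he.ne', one_smul, sub_self]
    have hNtD : Nᵀ * D = 0 := by
      have h := congrArg transpose hDN
      rwa [transpose_mul, hDt, transpose_zero] at h
    set P := C * G⁻¹ * Cᵀ with hPdef
    have hPC : P * C = C := by
      rw [hPdef, Matrix.mul_assoc (C * G⁻¹) Cᵀ C, ← hGdef, Matrix.mul_assoc, hGinv',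
        Matrix.mul_one]
    have hPt : Pᵀ = P := by
      rw [hPdef, transpose_mul, transpose_mul, transpose_transpose, hGit, Matrix.mul_assoc]
    have hPD : P * D = D := by
      have key : ∀ j, P *ᵥ Dᵀ j = Dᵀ j := by
        intro j
        have hmem : Dᵀ j ∈ LinearMap.ker (Nᵀ).mulVecLin := by
          simp only [LinearMap.mem_ker, mulVecLin_apply]
          rw [show Dᵀ j = D *ᵥ Pi.single j 1 from (mulVec_single_one D j).symm, mulVec_mulVec, hNtD, zero_mulVec]
        rw [← hrangeC] at hmem
        obtain ⟨v, hv⟩ := hmem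
        simp only [mulVecLin_apply] at hv
        rw [← hv, mulVec_mulVec, hPC]
      ext i j
      have h2 : P *ᵥ Dᵀ j = (P * D)ᵀ j := by
        rw [show Dᵀ j = D *ᵥ Pi.single j 1 from (mulVec_single_one D j).symm, mulVec_mulVec]; exact mulVec_single_one _ _
      have h3 := congrFun (h2 ▸ key j) i
      simpa using h3
    have hDP : D * P = D := by
      have h := congrArg transpose hPD
      rwa [transpose_mul, hDt, hPt] at h
    have hBt : (C * G⁻¹)ᵀ = G⁻¹ * Cᵀ := by rw [transpose_mul, hGit]
    refine ⟨(C * G⁻¹)ᵀ * D * (C * G⁻¹), posDef_iff_dotProduct_mulVec.mpr ⟨?_, ?_⟩, ?_⟩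
    · show ((C * G⁻¹)ᵀ * D * (C * G⁻¹))ᴴ = _
      rw [ct_eq]
      exact symm_aux _ _ hDt
    · intro x hx
      rw [star_trivial, quad_aux]
      set y := (C * G⁻¹) *ᵥ x with hy
      set S := e⁻¹ • (N * (Λ⁻¹ * Rᵀ)) with hSdef
      have hNtM : Nᵀ * M = Rᵀ := by
        have h := congrArg transpose hMN
        rwa [transpose_mul, hMt] at h
      have hMS : M * S = e⁻¹ • (R * Λ⁻¹ * Rᵀ) := by
        rw [hSdef, Matrix.mul_smul, ← Matrix.mul_assoc, hMN, ← Matrix.mul_assoc]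
      have hSt : Sᵀ = e⁻¹ • (R * Λ⁻¹ * Nᵀ) := by
        rw [hSdef, transpose_smul]
        congr 1
        rw [transpose_mul, transpose_mul, transpose_transpose, hΛit]
      have hStM : Sᵀ * M = e⁻¹ • (R * Λ⁻¹ * Rᵀ) := by
        rw [hSt, Matrix.smul_mul]
        congr 1
        rw [Matrix.mul_assoc (R * Λ⁻¹) Nᵀ M, hNtM]
      have hDS : D * S = 0 := by
        rw [hSdef, Matrix.mul_smul, ← Matrix.mul_assoc, hDN, Matrix.zero_mul, smul_zero]
      have hX : e⁻¹ • (R * Λ⁻¹ * Rᵀ) = M - D := by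
        rw [hDdef]; abel
      have e1 : M * S = M - D := by rw [hMS, hX]
      have e2 : Sᵀ * M = M - D := by rw [hStM, hX]
      have hT : (1 - S)ᵀ * M * (1 - S) = D :=
        calc (1 - S)ᵀ * M * (1 - S)
            = M - M * S - (Sᵀ * M - Sᵀ * M * S) := by
              rw [transpose_sub, transpose_one]; noncomm_ring
          _ = M - (M - D) - ((M - D) - (M - D) * S) := by rw [e2, e1]
          _ = D := by
              rw [Matrix.sub_mul, hDS, sub_zero, e1]; abel
      have hz : (1 - S) *ᵥ y ≠ 0 := by
        intro h0
        rw [Matrix.sub_mulVec, Matrix.one_mulVec, sub_eq_zero] at h0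
        have hymem : y ∈ LinearMap.range N.mulVecLin := by
          refine ⟨e⁻¹ • ((Λ⁻¹ * Rᵀ) *ᵥ y), ?_⟩
          rw [mulVecLin_apply, mulVec_smul, mulVec_mulVec, ← smul_mulVec, ← hSdef]
          exact h0.symm
        rw [← hCN] at hymem
        have hCy : Cᵀ *ᵥ y = 0 := by
          have h := LinearMap.mem_ker.mp hymem
          rwa [mulVecLin_apply] at h
        have hCyx : Cᵀ *ᵥ y = x := by
          rw [hy, mulVec_mulVec, ← Matrix.mul_assoc, ← hGdef, hGinv, Matrix.one_mulVec]
        exact hx (by rw [← hCyx, hCy])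
      have hpos := hM.dotProduct_mulVec_pos hz
      rw [star_trivial] at hpos
      calc (0:ℝ) < ((1 - S) *ᵥ y) ⬝ᵥ M *ᵥ ((1 - S) *ᵥ y) := hpos
        _ = y ⬝ᵥ D *ᵥ y := by rw [← quad_aux, hT]
    · have hCUC : C * ((C * G⁻¹)ᵀ * D * (C * G⁻¹)) * Cᵀ = D := by
        have h1 : C * ((C * G⁻¹)ᵀ * D * (C * G⁻¹)) * Cᵀ = P * D * P := by
          rw [hBt, hPdef]
          simp only [Matrix.mul_assoc]
        rw [h1, Matrix.mul_assoc, hDP, hPD]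
      rw [hCUC, hDdef]
      abel
  · -- backward
    rintro ⟨U, hU, rfl⟩
    rw [Matrix.add_mul, Matrix.smul_mul, hRRN, smul_smul, inv_mul_cancel₀ he.ne', one_smul,
      Matrix.mul_assoc (C * U) Cᵀ N, hCtN, Matrix.mul_zero, add_zero]
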